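/- Let M = (M_p)_{p∈ℕ₀} be a logarithmically convex sequence of positive reals with M_0 = 1 and quotient sequence m_p = M_{p+1}/M_p. The following statements are equivalent: (a) M is of moderate growth; (b) sup_{p≥1} m_p / M_p^{1/p} < ∞; (c) sup_{p≥0} m_{2p}/m_p < ∞; (d) sup_{p≥1} (M_{2p}/M_p²)^{1/p} < ∞. -/

import Mathlib

open Filter Real Topology

lemma aux_root_div_le {x y C : ℝ} (hx : 0 < x) (hy : 0 < y) (hC : 0 ≤ C) {p : ℕ} (hp : 1 ≤ p)
    (h : x ^ p ≤ C ^ p * y) : x / y ^ ((1:ℝ)/p) ≤ C := by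
  have hp0 : (p:ℝ) ≠ 0 := by positivity
  have hmul : (p:ℝ) * ((1:ℝ)/p) = 1 := by field_simp
  have hyp : (0:ℝ) < y ^ ((1:ℝ)/p) := Real.rpow_pos_of_pos hy _
  rw [div_le_iff₀ hyp]
  have hxp : x = ((x ^ p : ℝ)) ^ ((1:ℝ)/p) := by
    rw [← Real.rpow_natCast x p, ← Real.rpow_mul hx.le, hmul, Real.rpow_one]
  rw [hxp]
  calc ((x:ℝ)^p) ^ ((1:ℝ)/p) ≤ (C^p * y) ^ ((1:ℝ)/p) :=
        Real.rpow_le_rpow (by positivity) h (by positivity)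
    _ = C * y ^ ((1:ℝ)/p) := by
        rw [Real.mul_rpow (by positivity) hy.le, ← Real.rpow_natCast C p,
          ← Real.rpow_mul hC, hmul, Real.rpow_one]

lemma aux_pow_le_of_div_root {x y C : ℝ} (hx : 0 < x) (hy : 0 < y) {p : ℕ} (hp : 1 ≤ p)
    (h : x / y ^ ((1:ℝ)/p) ≤ C) : x ^ p ≤ C ^ p * y := by
  have hp0 : (p:ℝ) ≠ 0 := by positivity
  have hmul : ((1:ℝ)/p) * (p:ℝ) = 1 := by field_simp
  have hyp : (0:ℝ) < y ^ ((1:ℝ)/p) := Real.rpow_pos_of_pos hy _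
  rw [div_le_iff₀ hyp] at h
  calc x ^ p ≤ (C * y ^ ((1:ℝ)/p)) ^ p := pow_le_pow_left₀ hx.le h p
    _ = C ^ p * y := by
        rw [mul_pow, ← Real.rpow_natCast (y ^ ((1:ℝ)/p)) p, ← Real.rpow_mul hy.le, hmul,
          Real.rpow_one]

lemma aux_rpow_inv_le {z C : ℝ} (hz : 0 < z) (hC : 0 ≤ C) {p : ℕ} (hp : 1 ≤ p)
    (h : z ≤ C ^ p) : z ^ ((1:ℝ)/p) ≤ C := by
  have hp0 : (p:ℝ) ≠ 0 := by positivity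
  have hmul : (p:ℝ) * ((1:ℝ)/p) = 1 := by field_simp
  calc z ^ ((1:ℝ)/p) ≤ (C ^ p) ^ ((1:ℝ)/p) := Real.rpow_le_rpow hz.le h (by positivity)
    _ = C := by rw [← Real.rpow_natCast C p, ← Real.rpow_mul hC, hmul, Real.rpow_one]

lemma aux_le_pow_of_rpow_inv {z C : ℝ} (hz : 0 < z) {p : ℕ} (hp : 1 ≤ p)
    (h : z ^ ((1:ℝ)/p) ≤ C) : z ≤ C ^ p := by
  have hp0 : (p:ℝ) ≠ 0 := by positivity
  have hmul : ((1:ℝ)/p) * (p:ℝ) = 1 := by field_simp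
  have hzp : (0:ℝ) < z ^ ((1:ℝ)/p) := Real.rpow_pos_of_pos hz _
  calc z = (z ^ ((1:ℝ)/p)) ^ p := by
        rw [← Real.rpow_natCast (z ^ ((1:ℝ)/p)) p, ← Real.rpow_mul hz.le, hmul, Real.rpow_one]
    _ ≤ C ^ p := pow_le_pow_left₀ hzp.le h p

theorem stmt_1 (M : ℕ → ℝ) (hpos : ∀ p, 0 < M p) (hM0 : M 0 = 1)
    (hlc : ∀ p : ℕ, (M (p + 1)) ^ 2 ≤ M p * M (p + 2)) :
    List.TFAE [
      (∃ A : ℝ, 0 < A ∧ ∀ p q : ℕ, M (p + q) ≤ A ^ (p + q) * M p * M q),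
      (∃ C : ℝ, ∀ p : ℕ, 1 ≤ p →
        (M (p + 1) / M p) / (M p) ^ ((1 : ℝ) / (p : ℝ)) ≤ C),
      (∃ C : ℝ, ∀ p : ℕ,
        (M (2 * p + 1) / M (2 * p)) / (M (p + 1) / M p) ≤ C),
      (∃ C : ℝ, ∀ p : ℕ, 1 ≤ p →
        (M (2 * p) / (M p) ^ 2) ^ ((1 : ℝ) / (p : ℝ)) ≤ C)] := by
  set m : ℕ → ℝ := fun p => M (p+1) / M p with hmdef
  have hmpos : ∀ p, 0 < m p := fun p => div_pos (hpos _) (hpos _)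
  have hMsucc : ∀ p, M (p+1) = M p * m p := by
    intro p; simp only [hmdef]; rw [mul_comm, div_mul_cancel₀ _ (hpos p).ne']
  have hmono : ∀ j k, j ≤ k → m j ≤ m k := by
    have hstep : ∀ p, m p ≤ m (p+1) := by
      intro p
      simp only [hmdef]
      rw [div_le_div_iff₀ (hpos p) (hpos (p+1))]
      nlinarith [hlc p]
    exact fun j k h => monotone_nat_of_le_succ hstep h
  -- M a * m a ^ k ≤ M (a + k)
  have hge : ∀ a k, M a * m a ^ k ≤ M (a + k) := by
    intro a k
    induction k with
    | zero => simp
    | succ k ih =>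
      have h1 : M (a + (k+1)) = M (a+k) * m (a+k) := by
        rw [show a + (k+1) = (a+k) + 1 by ring, hMsucc]
      rw [h1, pow_succ, ← mul_assoc]
      exact mul_le_mul ih (hmono a (a+k) (Nat.le_add_right a k)) (hmpos a).le (hpos _).le
  -- M (a + k) ≤ M a * m (a+k) ^ k
  have hle : ∀ a k, M (a + k) ≤ M a * m (a + k) ^ k := by
    intro a k
    induction k with
    | zero => simp
    | succ k ih =>
      have h1 : M (a + (k+1)) = M (a+k) * m (a+k) := by
        rw [show a + (k+1) = (a+k) + 1 by ring, hMsucc]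
      rw [h1, show a + (k+1) = (a+k) + 1 by ring]
      calc M (a+k) * m (a+k) ≤ (M a * m (a+k) ^ k) * m ((a+k)+1) := by
            apply mul_le_mul ih (hmono _ _ (by omega)) (hmpos _).le
              (mul_nonneg (hpos a).le (pow_nonneg (hmpos _).le k))
        _ ≤ (M a * m ((a+k)+1) ^ k) * m ((a+k)+1) := by
            have h9 := pow_le_pow_left₀ (hmpos (a+k)).le (hmono (a+k) ((a+k)+1) (by omega)) k
            exact mul_le_mul_of_nonneg_right
              (mul_le_mul_of_nonneg_left h9 (hpos a).le) (hmpos _).le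
        _ = M a * m ((a+k)+1) ^ (k+1) := by ring
  -- single log-convexity shift
  have hS : ∀ j k, j ≤ k → M (j+1) * M (k+1) ≤ M j * M (k+2) := by
    intro j k h
    have h1 : m j ≤ m (k+1) := hmono _ _ (by omega)
    simp only [hmdef] at h1
    rw [div_le_div_iff₀ (hpos j) (hpos (k+1))] at h1
    have e : k+1+1 = k+2 := by omega
    rw [e] at h1
    linarith
  have hL : ∀ d a b, a ≤ b → M (a+d) * M (b+d) ≤ M a * M (b + 2*d) := by
    intro d
    induction d with
    | zero => intro a b h; simp
    | succ d ih =>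
      intro a b h
      rw [show a + (d+1) = (a+d) + 1 by ring, show b + (d+1) = (b+d) + 1 by ring]
      calc M ((a+d)+1) * M ((b+d)+1) ≤ M (a+d) * M ((b+d)+2) := hS (a+d) (b+d) (by omega)
        _ = M (a+d) * M ((b+2)+d) := by rw [show (b+d)+2 = (b+2)+d by ring]
        _ ≤ M a * M ((b+2) + 2*d) := ih a (b+2) (by omega)
        _ = M a * M (b + 2*(d+1)) := by rw [show (b+2)+2*d = b+2*(d+1) by ring]
  have hsq : ∀ p q, M (p+q)^2 ≤ M (2*p) * M (2*q) := by
    have key : ∀ p q, p ≤ q → M (p+q)^2 ≤ M (2*p) * M (2*q) := by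
      intro p q h
      have hl := hL (q - p) (2*p) (2*p) le_rfl
      rw [show 2*p + (q-p) = p + q by omega, show 2*p + 2*(q-p) = 2*q by omega] at hl
      rw [pow_two]; exact hl
    intro p q
    rcases le_total p q with h | h
    · exact key p q h
    · rw [show p + q = q + p by ring, mul_comm]
      exact key q p h
  tfae_have 1 → 2 := by
    rintro ⟨A, hA, h⟩
    refine ⟨A^2, fun p hp => ?_⟩
    have h1 : M p * m p ^ p ≤ M (p + p) := hge p p
    have h2 : M (p+p) ≤ A^(p+p) * M p * M p := h p p
    have hAe : A^(p+p) = (A^2)^p := by rw [← pow_mul, two_mul]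
    have h3 : m p ^ p ≤ (A^2)^p * M p := by
      have h4 : M p * m p ^ p ≤ M p * ((A^2)^p * M p) := by
        calc M p * m p ^ p ≤ A^(p+p) * M p * M p := le_trans h1 h2
          _ = M p * ((A^2)^p * M p) := by rw [hAe]; ring
      exact le_of_mul_le_mul_left h4 (hpos p)
    exact aux_root_div_le (hmpos p) (hpos p) (by positivity) hp h3
  tfae_have 2 → 3 := by
    rintro ⟨C, h⟩
    have hC1 : 1 ≤ C := by
      have h1 := h 1 le_rfl
      norm_num at h1
      -- h1 : M 2 / M 1 ≤ C  (after M 1 ^ 1 simplification)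
      have hM2 : M 1 ^ 2 ≤ M 2 := by
        have := hlc 0
        rw [hM0] at this
        norm_num at this
        exact this
      have h9 : 1 ≤ M 2 / M 1 / M 1 := by
        rw [div_div, le_div_iff₀ (mul_pos (hpos 1) (hpos 1))]
        nlinarith [hpos 1]
      linarith
    refine ⟨C^2, fun p => ?_⟩
    have hgoal : (M (2*p+1) / M (2*p)) / (M (p+1) / M p) = m (2*p) / m p := rfl
    rw [hgoal]
    rcases Nat.eq_zero_or_pos p with rfl | hp
    · norm_num
      rw [div_self (hmpos 0).ne']
      nlinarith
    · have h2p := h (2*p) (by omega)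
      have h1 : m (2*p) ^ (2*p) ≤ C ^ (2*p) * M (2*p) :=
        aux_pow_le_of_div_root (hmpos _) (hpos _) (by omega) h2p
      have h2 : M p ≤ m p ^ p := by
        have := hle 0 p
        simpa [hM0] using this
      have h3 : M (2*p) ≤ m p ^ p * m (2*p) ^ p := by
        have h4 := hle p p
        rw [show p + p = 2*p by ring] at h4
        calc M (2*p) ≤ M p * m (2*p) ^ p := h4
          _ ≤ m p ^ p * m (2*p) ^ p := by
            apply mul_le_mul_of_nonneg_right h2 (pow_nonneg (hmpos _).le p)
      have h5 : m (2*p) ^ p * m (2*p) ^ p ≤ ((C^2 * m p) ^ p) * m (2*p) ^ p := by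
        calc m (2*p) ^ p * m (2*p) ^ p = m (2*p) ^ (2*p) := by rw [← pow_add]; congr 1; omega
          _ ≤ C ^ (2*p) * M (2*p) := h1
          _ ≤ C ^ (2*p) * (m p ^ p * m (2*p) ^ p) := by
              have hC0 : (0:ℝ) ≤ C := by linarith
              apply mul_le_mul_of_nonneg_left h3 (pow_nonneg hC0 _)
          _ = ((C^2 * m p) ^ p) * m (2*p) ^ p := by
              rw [mul_pow, ← pow_mul]; ring
      have h6 : m (2*p) ^ p ≤ (C^2 * m p) ^ p :=
        le_of_mul_le_mul_right h5 (pow_pos (hmpos _) p)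
      have h7 : m (2*p) ≤ C^2 * m p := by
        have hCpos : (0:ℝ) < C := by linarith
        exact le_of_pow_le_pow_left₀ (by omega)
          (mul_nonneg (by positivity) (hmpos p).le) h6
      rw [div_le_iff₀ (hmpos p)]
      linarith
  tfae_have 3 → 4 := by
    rintro ⟨C, h⟩
    have hC : ∀ p, m (2*p) ≤ C * m p := by
      intro p
      have h' : m (2*p) / m p ≤ C := h p
      rwa [div_le_iff₀ (hmpos p)] at h'
    have hC1 : 1 ≤ C := by
      have := hC 0
      norm_num at this
      nlinarith [hmpos 0]
    have hCpos : (0:ℝ) < C := by linarith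
    -- m n ≤ C^(n-1) * m 1 for n ≥ 1
    have hmA : ∀ n, 1 ≤ n → m n ≤ C^(n-1) * m 1 := by
      intro n
      induction n using Nat.strong_induction_on with
      | _ n ih =>
        intro hn
        rcases Nat.lt_or_ge n 2 with h2 | h2
        · have : n = 1 := by omega
          subst this; simp
        · rcases Nat.even_or_odd n with ⟨q, hq⟩ | ⟨q, hq⟩
          · have hq1 : 1 ≤ q := by omega
            have e : n = 2*q := by omega
            have k1 : m n ≤ C * m q := by rw [e]; exact hC q
            have k2 : m q ≤ C^(q-1) * m 1 := ih q (by omega) hq1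
            calc m n ≤ C * m q := k1
              _ ≤ C * (C^(q-1) * m 1) := by
                  apply mul_le_mul_of_nonneg_left k2 hCpos.le
              _ = C^q * m 1 := by
                  rw [← mul_assoc, ← pow_succ']
                  congr 2
                  omega
              _ ≤ C^(n-1) * m 1 := by
                  apply mul_le_mul_of_nonneg_right _ (hmpos 1).le
                  exact pow_le_pow_right₀ hC1 (by omega)
          · have hq1 : 1 ≤ q := by omega
            have k1 : m n ≤ m (2*(q+1)) := hmono _ _ (by omega)
            have k2 : m (2*(q+1)) ≤ C * m (q+1) := hC (q+1)
            have k3 : m (q+1) ≤ C^q * m 1 := by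
              have := ih (q+1) (by omega) (by omega)
              simpa using this
            calc m n ≤ C * m (q+1) := le_trans k1 k2
              _ ≤ C * (C^q * m 1) := by
                  apply mul_le_mul_of_nonneg_left k3 hCpos.le
              _ = C^(q+1) * m 1 := by rw [← mul_assoc, ← pow_succ']
              _ ≤ C^(n-1) * m 1 := by
                  apply mul_le_mul_of_nonneg_right _ (hmpos 1).le
                  exact pow_le_pow_right₀ hC1 (by omega)
    -- M (2p) * m 0 ≤ C^(2p) * m p * M p ^ 2
    have hmB : ∀ p, M (2*p) * m 0 ≤ C^(2*p) * m p * M p ^ 2 := by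
      intro p
      induction p with
      | zero => norm_num [hM0]
      | succ p ih =>
        have hpos1 : (0:ℝ) ≤ C ^ (2*p) * m p * M p ^ 2 :=
          mul_nonneg (mul_nonneg (pow_nonneg hCpos.le _) (hmpos p).le) (sq_nonneg _)
        have k1 : m (2*p) ≤ C * m p := hC p
        have k2 : m (2*p+1) ≤ C * m (p+1) := by
          have := hC (p+1)
          rw [show 2*(p+1) = (2*p+1)+1 by ring] at this
          exact le_trans (hmono (2*p+1) ((2*p+1)+1) (by omega)) this
        have e1 : M (2*(p+1)) = M (2*p) * m (2*p) * m (2*p+1) := by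
          rw [show 2*(p+1) = (2*p+1)+1 by ring, hMsucc, show 2*p+1 = (2*p)+1 from rfl, hMsucc]
        rw [e1]
        calc M (2*p) * m (2*p) * m (2*p+1) * m 0
            = (M (2*p) * m 0) * m (2*p) * m (2*p+1) := by ring
          _ ≤ (C^(2*p) * m p * M p^2) * (C * m p) * (C * m (p+1)) := by
              apply mul_le_mul _ k2 (hmpos _).le
                (mul_nonneg hpos1 (mul_nonneg hCpos.le (hmpos p).le))
              apply mul_le_mul ih k1 (hmpos _).le hpos1
          _ = (C^(2*p) * C * C) * m (p+1) * (M p * m p)^2 := by ring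
          _ = C^(2*(p+1)) * m (p+1) * M (p+1)^2 := by
              rw [← hMsucc]; ring
    set D : ℝ := m 1 / m 0 with hD
    have hD1 : 1 ≤ D := by
      rw [hD, le_div_iff₀ (hmpos 0)]
      simpa using hmono 0 1 (by omega)
    have hD0 : (0:ℝ) ≤ D := by linarith
    refine ⟨C^3 * D, fun p hp => ?_⟩
    have hzpos : 0 < M (2*p) / M p^2 := div_pos (hpos _) (pow_pos (hpos p) 2)
    apply aux_rpow_inv_le hzpos (mul_nonneg (pow_nonneg hCpos.le 3) hD0) hp
    rw [div_le_iff₀ (pow_pos (hpos p) 2)]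
    -- M (2p) ≤ (C^3*D)^p * M p^2; multiply by m 0
    rw [← mul_le_mul_iff_of_pos_right (hmpos 0)]
    have h1 : M (2*p) * m 0 ≤ C^(2*p) * (C^(p-1) * m 1) * M p^2 := by
      calc M (2*p) * m 0 ≤ C^(2*p) * m p * M p^2 := hmB p
        _ ≤ C^(2*p) * (C^(p-1) * m 1) * M p^2 := by
            apply mul_le_mul_of_nonneg_right _ (by positivity)
            exact mul_le_mul_of_nonneg_left (hmA p hp) (pow_nonneg hCpos.le _)
    have h2 : C^(2*p) * C^(p-1) = C^(3*p-1) := by rw [← pow_add]; congr 1; omega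
    have h3 : C^(3*p-1) ≤ C^(3*p) := pow_le_pow_right₀ hC1 (by omega)
    have h5 : D ≤ D ^ p := le_self_pow₀ hD1 (by omega)
    have hm1 : m 1 = D * m 0 := by rw [hD, div_mul_cancel₀ _ (hmpos 0).ne']
    calc M (2*p) * m 0 ≤ C^(2*p) * (C^(p-1) * m 1) * M p^2 := h1
      _ = C^(3*p-1) * (D * m 0) * M p^2 := by rw [hm1, ← h2]; ring
      _ ≤ C^(3*p) * (D^p * m 0) * M p^2 := by
          apply mul_le_mul_of_nonneg_right _ (by positivity)
          apply mul_le_mul h3 _ (mul_nonneg hD0 (hmpos 0).le) (pow_nonneg hCpos.le _)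
          exact mul_le_mul_of_nonneg_right h5 (hmpos 0).le
      _ = (C^3 * D)^p * M p^2 * m 0 := by rw [mul_pow, ← pow_mul]; ring
  tfae_have 4 → 1 := by
    rintro ⟨C, h⟩
    have hC1 : 1 ≤ C := by
      have h1 := h 1 le_rfl
      norm_num at h1
      have hM2 : M 1 ^ 2 ≤ M 2 := by
        have := hlc 0
        rw [hM0] at this
        norm_num at this
        exact this
      have h9 : 1 ≤ M 2 / M 1 ^ 2 := by
        rw [le_div_iff₀ (pow_pos (hpos 1) 2)]
        linarith
      linarith
    have hCpos : (0:ℝ) < C := by linarith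
    have hpow : ∀ p, M (2*p) ≤ C^p * M p ^ 2 := by
      intro p
      rcases Nat.eq_zero_or_pos p with rfl | hp
      · norm_num [hM0]
      · have h1 := aux_le_pow_of_rpow_inv (z := M (2*p)/M p^2)
          (div_pos (hpos _) (pow_pos (hpos p) 2)) hp (h p hp)
        rwa [div_le_iff₀ (pow_pos (hpos p) 2)] at h1
    refine ⟨C, hCpos, fun p q => ?_⟩
    have h2 : M (p+q)^2 ≤ (C^(p+q) * M p * M q)^2 := by
      have hCpq : 1 ≤ C^(p+q) := one_le_pow₀ hC1
      calc M (p+q)^2 ≤ M (2*p) * M (2*q) := hsq p q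
        _ ≤ (C^p * M p^2) * (C^q * M q^2) :=
            mul_le_mul (hpow p) (hpow q) (hpos _).le
              (mul_nonneg (pow_nonneg hCpos.le p) (by positivity))
        _ = (C^(p+q)) * (M p * M q)^2 := by rw [pow_add]; ring
        _ ≤ (C^(p+q))^2 * (M p * M q)^2 := by
            apply mul_le_mul_of_nonneg_right _ (by positivity)
            exact le_self_pow₀ hCpq (by omega)

        _ = (C^(p+q) * M p * M q)^2 := by ring
    have hr : (0:ℝ) ≤ C^(p+q) * M p * M q :=
      mul_nonneg (mul_nonneg (pow_nonneg hCpos.le _) (hpos p).le) (hpos q).le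
    exact le_of_pow_le_pow_left₀ (by omega) hr h2
  tfae_finish
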